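/- For each positive definite continuous function ρ : [0, ∞) → [0, ∞) there exists a continuous function σ of class KL with σ(s, 0) = s for all s ≥ 0, such that: if t₀ ≤ t₁, y : [t₀, t₁] → [0, ∞) is absolutely continuous and I ⊂ [t₀, t₁] is a set of Lebesgue measure zero such that ẏ(t) exists and satisfies ẏ(t) ≤ −ρ(y(t)) for all t ∈ [t₀, t₁] \ I, then y(t) ≤ σ(y(t₀), t − t₀) for all t ∈ [t₀, t₁]. -/

import Mathlib

/-- A function `γ : [0,∞) → [0,∞)` is of class `K` if it is continuous,
strictly increasing and `γ 0 = 0`. -/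
def ClassK (γ : ℝ → ℝ) : Prop :=
  ContinuousOn γ (Set.Ici 0) ∧ StrictMonoOn γ (Set.Ici 0) ∧ γ 0 = 0

/-- A function `σ : [0,∞) × [0,∞) → [0,∞)` is of class `KL` if it is continuous,
for each fixed `t ≥ 0` the map `s ↦ σ s t` is of class `K`, and for each fixed `s ≥ 0`
the map `t ↦ σ s t` is non-increasing with `σ s t → 0` as `t → +∞`. -/
def ClassKL (σ : ℝ → ℝ → ℝ) : Prop :=
  ContinuousOn (fun p : ℝ × ℝ => σ p.1 p.2) (Set.Ici 0 ×ˢ Set.Ici 0) ∧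
  (∀ t ∈ Set.Ici (0:ℝ), ClassK (fun s => σ s t)) ∧
  (∀ s ∈ Set.Ici (0:ℝ), AntitoneOn (σ s) (Set.Ici 0) ∧
    Filter.Tendsto (σ s) Filter.atTop (nhds 0)) ∧
  (∀ s ∈ Set.Ici (0:ℝ), ∀ t ∈ Set.Ici (0:ℝ), 0 ≤ σ s t)

/-- Absolute continuity of `y` on the interval `[a, b]`. -/
def AbsContOn {E : Type*} [NormedAddCommGroup E] (y : ℝ → E) (a b : ℝ) : Prop :=
  ∀ ε > (0:ℝ), ∃ δ > (0:ℝ), ∀ n : ℕ, ∀ s t : ℕ → ℝ,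
    (∀ i < n, a ≤ s i ∧ s i ≤ t i ∧ t i ≤ b) →
    (∀ i, i + 1 < n → t i ≤ s (i + 1)) →
    (∑ i ∈ Finset.range n, (t i - s i)) < δ →
    (∑ i ∈ Finset.range n, ‖y (t i) - y (s i)‖) < ε

open MeasureTheory Set Filter

section KLaux

lemma abscont_continuousOn {y : ℝ → ℝ} {t₀ t₁ : ℝ} (h : AbsContOn y t₀ t₁) :
    ContinuousOn y (Set.Icc t₀ t₁) := by
  intro x hx
  rw [Metric.continuousWithinAt_iff]
  intro ε hε
  obtain ⟨δ, hδpos, hAC⟩ := h ε hε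
  refine ⟨δ, hδpos, fun x' hx' hdist => ?_⟩
  have h1 := hAC 1 (fun _ => min x' x) (fun _ => max x' x)
    (by
      intro i _
      exact ⟨le_min hx'.1 hx.1, min_le_max, max_le hx'.2 hx.2⟩)
    (by intro i hi; omega)
    (by
      simp only [Finset.sum_range_one]
      rw [max_sub_min_eq_abs, abs_sub_comm]
      rwa [Real.dist_eq] at hdist)
  simp only [Finset.sum_range_one, Real.norm_eq_abs] at h1
  rw [Real.dist_eq]
  rcases le_total x' x with hc | hc
  · rw [max_eq_right hc, min_eq_left hc] at h1
    rwa [abs_sub_comm]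
  · rw [max_eq_left hc, min_eq_right hc] at h1
    exact h1

lemma deriv_estimate {y : ℝ → ℝ} {τ d c ε : ℝ} (hy : HasDerivAt y d τ) (hd : d ≤ c)
    (hε : 0 < ε) :
    ∃ r > 0, ∀ x, |x - τ| < r →
      (τ ≤ x → y x - y τ ≤ (c + ε) * (x - τ)) ∧ (x ≤ τ → y τ - y x ≤ (c + ε) * (τ - x)) := by
  have h2 := (hasDerivAt_iff_isLittleO.mp hy).def hε
  rw [Metric.eventually_nhds_iff] at h2
  obtain ⟨r, hr, hball⟩ := h2
  refine ⟨r, hr, fun x hx => ?_⟩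
  have hb := hball (show dist x τ < r by rwa [Real.dist_eq])
  simp only [smul_eq_mul, Real.norm_eq_abs] at hb
  rw [abs_le] at hb
  constructor
  · intro hτx
    have h3 : y x - y τ ≤ (x - τ) * d + ε * (x - τ) := by
      have := hb.2
      rw [abs_of_nonneg (by linarith)] at this
      linarith
    nlinarith [sub_nonneg.mpr hτx]
  · intro hxτ
    have h3 : y τ - y x ≤ (τ - x) * d + ε * (τ - x) := by
      have := hb.1
      rw [abs_of_nonpos (by linarith)] at this
      nlinarith
    nlinarith [sub_nonneg.mpr hxτ]

lemma key {y : ℝ → ℝ} {t₀ t₁ a b c : ℝ} {I : Set ℝ}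
    (hAC : AbsContOn y t₀ t₁) (hI : MeasureTheory.volume I = 0)
    (ha : t₀ ≤ a) (hab : a ≤ b) (hb : b ≤ t₁)
    (hd : ∀ τ ∈ Set.Icc a b \ I, DifferentiableAt ℝ y τ ∧ deriv y τ ≤ c) :
    y b - y a ≤ c * (b - a) := by
  have hba2 : (0:ℝ) < b - a + 2 := by linarith
  refine le_of_forall_pos_le_add fun ε' hε' => ?_
  set ε := ε' / (b - a + 2) with hεdef
  have hε : 0 < ε := div_pos hε' hba2
  obtain ⟨δ, hδpos, hACδ⟩ := hAC ε hε
  have hcε1 : (0:ℝ) < |c| + ε + 1 := by positivity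
  set δ' := min δ (ε / (|c| + ε + 1)) with hδ'def
  have hδ'pos : 0 < δ' := lt_min hδpos (div_pos hε hcε1)
  obtain ⟨U, hIU, hUopen, hUμ⟩ := I.exists_isOpen_lt_of_lt (ENNReal.ofReal δ')
    (by rw [hI]; exact ENNReal.ofReal_pos.mpr hδ'pos)
  have hderiv : ∀ τ ∈ Set.Icc a b, τ ∉ U → ∃ r > 0, ∀ x, |x - τ| < r →
      (τ ≤ x → y x - y τ ≤ (c + ε) * (x - τ)) ∧ (x ≤ τ → y τ - y x ≤ (c + ε) * (τ - x)) := by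
    intro τ hτ hτU
    obtain ⟨hdiff, hdc⟩ := hd τ ⟨hτ, fun hτI => hτU (hIU hτI)⟩
    exact deriv_estimate hdiff.hasDerivAt hdc hε
  set P : ℝ → Prop := fun x => ∃ n : ℕ, ∃ s t : ℕ → ℝ,
    (∀ i < n, a ≤ s i ∧ s i ≤ t i ∧ t i ≤ x) ∧
    (∀ i, i + 1 < n → t i ≤ s (i + 1)) ∧
    (∀ i < n, Set.Ioo (s i) (t i) ⊆ U) ∧
    y x - y a ≤ (c + ε) * ((x - a) - ∑ i ∈ Finset.range n, (t i - s i))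
      + ∑ i ∈ Finset.range n, (y (t i) - y (s i)) with hP
  have hPa : P a := ⟨0, (fun _ => a), (fun _ => a), by simp, by simp, by simp, by simp⟩
  -- extension across a piece of U
  have hextU : ∀ x x' : ℝ, x ≤ x' → Set.Ioo x x' ⊆ U → a ≤ x → P x → P x' := by
    rintro x x' hxx' hsub hax ⟨n, s, t, h1, h2, h3, h4⟩
    refine ⟨n+1, fun i => if i < n then s i else x, fun i => if i < n then t i else x',
      ?_, ?_, ?_, ?_⟩
    · intro i _
      by_cases hin : i < n
      · simp only [if_pos hin]
        obtain ⟨u1, u2, u3⟩ := h1 i hin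
        exact ⟨u1, u2, u3.trans hxx'⟩
      · simp only [if_neg hin]
        exact ⟨hax, hxx', le_refl _⟩
    · intro i hi
      by_cases hin : i + 1 < n
      · have hin' : i < n := by omega
        simp only [if_pos hin, if_pos hin']
        exact h2 i hin
      · have hin' : i < n := by omega
        simp only [if_pos hin', if_neg hin]
        exact (h1 i hin').2.2
    · intro i _
      by_cases hin : i < n
      · simp only [if_pos hin]; exact h3 i hin
      · simp only [if_neg hin]; exact hsub
    · have e1 : (∑ i ∈ Finset.range (n+1),
          ((if i < n then t i else x') - (if i < n then s i else x)))
          = (∑ i ∈ Finset.range n, (t i - s i)) + (x' - x) := by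
        rw [Finset.sum_range_succ]
        simp only [lt_self_iff_false, if_false]
        congr 1
        refine Finset.sum_congr rfl fun i hi => ?_
        rw [if_pos (Finset.mem_range.mp hi), if_pos (Finset.mem_range.mp hi)]
      have e2 : (∑ i ∈ Finset.range (n+1),
          (y (if i < n then t i else x') - y (if i < n then s i else x)))
          = (∑ i ∈ Finset.range n, (y (t i) - y (s i))) + (y x' - y x) := by
        rw [Finset.sum_range_succ]
        simp only [lt_self_iff_false, if_false]
        congr 1
        refine Finset.sum_congr rfl fun i hi => ?_
        rw [if_pos (Finset.mem_range.mp hi), if_pos (Finset.mem_range.mp hi)]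
      rw [e1, e2]
      have e3 : (c + ε) * ((x' - a) - ((∑ i ∈ Finset.range n, (t i - s i)) + (x' - x)))
          = (c + ε) * ((x - a) - ∑ i ∈ Finset.range n, (t i - s i)) := by ring
      rw [e3]
      linarith [h4]
  -- extension with a derivative estimate (no new interval)
  have hextD : ∀ x x' : ℝ, x ≤ x' → P x → y x' - y x ≤ (c + ε) * (x' - x) → P x' := by
    rintro x x' hxx' ⟨n, s, t, h1, h2, h3, h4⟩ hest
    refine ⟨n, s, t, fun i hi => ⟨(h1 i hi).1, (h1 i hi).2.1, ((h1 i hi).2.2).trans hxx'⟩,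
      h2, h3, ?_⟩
    have e3 : (c + ε) * ((x' - a) - ∑ i ∈ Finset.range n, (t i - s i))
        = (c + ε) * ((x - a) - ∑ i ∈ Finset.range n, (t i - s i)) + (c + ε) * (x' - x) := by
      ring
    rw [e3]
    linarith [h4]
  have hPb : P b := by
    rcases eq_or_lt_of_le hab with heq | hab'
    · exact heq ▸ hPa
    set S := {x | x ∈ Set.Icc a b ∧ P x} with hS
    have haS : a ∈ S := ⟨⟨le_refl a, hab⟩, hPa⟩
    have hSne : S.Nonempty := ⟨a, haS⟩
    have hSbdd : BddAbove S := ⟨b, fun x hx => hx.1.2⟩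
    set m := sSup S with hm
    have ham : a ≤ m := le_csSup hSbdd haS
    have hmb : m ≤ b := csSup_le hSne fun x hx => hx.1.2
    have hPm : P m := by
      by_cases hmU : m ∈ U
      · obtain ⟨h, hh, hball⟩ := Metric.isOpen_iff.mp hUopen m hmU
        obtain ⟨x', hx'S, hx'⟩ := exists_lt_of_lt_csSup hSne (show m - h/2 < m by linarith)
        have hx'm : x' ≤ m := le_csSup hSbdd hx'S
        have hsub : Set.Ioo x' m ⊆ U := by
          intro τ hτ
          apply hball
          rw [Metric.mem_ball, Real.dist_eq, abs_of_nonpos (by linarith [hτ.2])]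
          linarith [hτ.1]
        exact hextU x' m hx'm hsub hx'S.1.1 hx'S.2
      · obtain ⟨r, hr, hest⟩ := hderiv m ⟨ham, hmb⟩ hmU
        obtain ⟨x', hx'S, hx'⟩ := exists_lt_of_lt_csSup hSne (show m - r < m by linarith)
        have hx'm : x' ≤ m := le_csSup hSbdd hx'S
        refine hextD x' m hx'm hx'S.2 ?_
        exact (hest x' (by rw [abs_sub_comm, abs_of_nonneg (by linarith)]; linarith)).2 hx'm
    rcases eq_or_lt_of_le hmb with heq | hmb'
    · exact heq ▸ hPm
    exfalso
    by_cases hmU : m ∈ U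
    · obtain ⟨h, hh, hball⟩ := Metric.isOpen_iff.mp hUopen m hmU
      set x' := min b (m + h/2) with hx'def
      have hmx' : m < x' := lt_min hmb' (by linarith)
      have hx'b : x' ≤ b := min_le_left _ _
      have hsub : Set.Ioo m x' ⊆ U := by
        intro τ hτ
        apply hball
        rw [Metric.mem_ball, Real.dist_eq, abs_of_nonneg (by linarith [hτ.1])]
        have : τ < m + h/2 := lt_of_lt_of_le hτ.2 (min_le_right _ _)
        linarith
      have hPx' : P x' := hextU m x' hmx'.le hsub ham hPm
      have : x' ≤ m := le_csSup hSbdd ⟨⟨ham.trans hmx'.le, hx'b⟩, hPx'⟩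
      linarith
    · obtain ⟨r, hr, hest⟩ := hderiv m ⟨ham, hmb⟩ hmU
      set x' := min b (m + r/2) with hx'def
      have hmx' : m < x' := lt_min hmb' (by linarith)
      have hx'b : x' ≤ b := min_le_left _ _
      have hx'r : |x' - m| < r := by
        rw [abs_of_nonneg (by linarith)]
        have : x' ≤ m + r/2 := min_le_right _ _
        linarith
      have hPx' : P x' := hextD m x' hmx'.le hPm ((hest x' hx'r).1 hmx'.le)
      have : x' ≤ m := le_csSup hSbdd ⟨⟨ham.trans hmx'.le, hx'b⟩, hPx'⟩
      linarith
  obtain ⟨n, s, t, h1, h2, h3, h4⟩ := hPb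
  have hchain : ∀ i j, i < j → j < n → t i ≤ s j := by
    intro i j hij hjn
    induction j with
    | zero => omega
    | succ k ih =>
      rcases Nat.lt_succ_iff_lt_or_eq.mp hij with h' | h'
      · exact le_trans (ih h' (by omega)) (le_trans (h1 k (by omega)).2.1 (h2 k hjn))
      · subst h'
        exact h2 i hjn
  have hdisj : (↑(Finset.range n) : Set ℕ).PairwiseDisjoint
      (fun i => Set.Ioo (s i) (t i)) := by
    intro i hi j hj hij
    simp only [Finset.coe_range, Set.mem_Iio] at hi hj
    rcases lt_or_gt_of_ne hij with h' | h'
    · exact Set.disjoint_left.mpr fun x hx1 hx2 =>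
        absurd ((hx1.2.trans_le (hchain i j h' hj)).trans hx2.1) (lt_irrefl x)
    · exact Set.disjoint_left.mpr fun x hx1 hx2 =>
        absurd ((hx2.2.trans_le (hchain j i h' hi)).trans hx1.1) (lt_irrefl x)
  have hlen : ∑ i ∈ Finset.range n, (t i - s i) < δ' := by
    have hmeas : volume (⋃ i ∈ Finset.range n, Set.Ioo (s i) (t i))
        = ∑ i ∈ Finset.range n, volume (Set.Ioo (s i) (t i)) :=
      measure_biUnion_finset hdisj (fun i _ => measurableSet_Ioo)
    have hle : (∑ i ∈ Finset.range n, volume (Set.Ioo (s i) (t i))) ≤ volume U := by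
      rw [← hmeas]
      exact measure_mono (Set.iUnion₂_subset fun i hi => h3 i (Finset.mem_range.mp hi))
    have heq : ENNReal.ofReal (∑ i ∈ Finset.range n, (t i - s i))
        = ∑ i ∈ Finset.range n, volume (Set.Ioo (s i) (t i)) := by
      rw [ENNReal.ofReal_sum_of_nonneg
        (fun i hi => sub_nonneg.mpr (h1 i (Finset.mem_range.mp hi)).2.1)]
      exact Finset.sum_congr rfl fun i hi => (Real.volume_Ioo).symm
    have hlt : ENNReal.ofReal (∑ i ∈ Finset.range n, (t i - s i)) < ENNReal.ofReal δ' :=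
      lt_of_le_of_lt (heq ▸ hle) hUμ
    exact (ENNReal.ofReal_lt_ofReal_iff hδ'pos).mp hlt
  have hAC2 := hACδ n s t
    (fun i hi => ⟨ha.trans (h1 i hi).1, (h1 i hi).2.1, ((h1 i hi).2.2).trans hb⟩) h2
    (hlen.trans_le (min_le_left _ _))
  have hsum : ∑ i ∈ Finset.range n, (y (t i) - y (s i)) < ε :=
    lt_of_le_of_lt (Finset.sum_le_sum fun i _ => le_abs_self _)
      (by simpa [Real.norm_eq_abs] using hAC2)
  set L := ∑ i ∈ Finset.range n, (t i - s i) with hL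
  have hL0 : 0 ≤ L :=
    Finset.sum_nonneg fun i hi => sub_nonneg.mpr (h1 i (Finset.mem_range.mp hi)).2.1
  have habs : -((c + ε) * L) ≤ (|c| + ε) * L := by
    have h7 : |c + ε| ≤ |c| + ε := by
      calc |c + ε| ≤ |c| + |ε| := abs_add_le _ _
      _ = |c| + ε := by rw [abs_of_pos hε]
    have h8 := neg_abs_le ((c + ε) * L)
    rw [abs_mul, abs_of_nonneg hL0] at h8
    nlinarith
  have h5 : (|c| + ε) * L ≤ ε := by
    have h6 : (|c| + ε) * L ≤ (|c| + ε) * (ε / (|c| + ε + 1)) := by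
      apply mul_le_mul_of_nonneg_left (le_trans hlen.le (min_le_right _ _))
      positivity
    have h7 : (|c| + ε) * (ε / (|c| + ε + 1)) ≤ ε := by
      rw [mul_div_assoc', div_le_iff₀ hcε1]
      nlinarith [abs_nonneg c]
    linarith
  have hexp : (c + ε) * ((b - a) - L) = c * (b - a) + ε * (b - a) - (c + ε) * L := by ring
  have hfin : ε * (b - a + 2) = ε' := div_mul_cancel₀ _ (ne_of_gt hba2)
  nlinarith [h4, hsum, habs, h5]

noncomputable def glow (ρ : ℝ → ℝ) (w : ℝ) : ℝ := sInf (ρ '' Set.Icc (w/2) (2*w))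
noncomputable def rhat (ρ : ℝ → ℝ) (w : ℝ) : ℝ := min w (glow ρ w)
noncomputable def ff (ρ : ℝ → ℝ) (w : ℝ) : ℝ := (rhat ρ w)⁻¹

section
variable {ρ : ℝ → ℝ} (hρc : ContinuousOn ρ (Set.Ici 0))
  (hρpos : ∀ s > (0:ℝ), 0 < ρ s)
include hρc hρpos

omit hρc hρpos in
lemma Icc_sub_Ici {w : ℝ} (hw : 0 < w) : Set.Icc (w/2) (2*w) ⊆ Set.Ici 0 :=
  fun x hx => le_trans (by positivity) hx.1

omit hρpos in
lemma glow_le {w : ℝ} (hw : 0 < w) {v : ℝ} (hv : v ∈ Set.Icc (w/2) (2*w)) :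
    glow ρ w ≤ ρ v := by
  have hcomp : IsCompact (ρ '' Set.Icc (w/2) (2*w)) :=
    (isCompact_Icc).image_of_continuousOn (hρc.mono (Icc_sub_Ici hw))
  exact csInf_le hcomp.bddBelow (Set.mem_image_of_mem ρ hv)

lemma glow_pos {w : ℝ} (hw : 0 < w) : 0 < glow ρ w := by
  have hne : (Set.Icc (w/2) (2*w)).Nonempty := Set.nonempty_Icc.mpr (by linarith)
  have hcomp : IsCompact (ρ '' Set.Icc (w/2) (2*w)) :=
    (isCompact_Icc).image_of_continuousOn (hρc.mono (Icc_sub_Ici hw))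
  have hmem : sInf (ρ '' Set.Icc (w/2) (2*w)) ∈ ρ '' Set.Icc (w/2) (2*w) :=
    hcomp.sInf_mem (hne.image ρ)
  obtain ⟨x₀, hx₀, hx₀eq⟩ := hmem
  rw [glow, ← hx₀eq]
  exact hρpos x₀ (lt_of_lt_of_le (by positivity) hx₀.1)

omit hρpos in
lemma glow_anti {w x : ℝ} (hw : 0 < w) (h1 : w ≤ x) (h2 : x ≤ 2*w) :
    glow ρ x ≤ sInf (ρ '' Set.Icc w (2*w)) := by
  have hx : 0 < x := lt_of_lt_of_le hw h1
  have hsub : Set.Icc w (2*w) ⊆ Set.Icc (x/2) (2*x) := by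
    apply Set.Icc_subset_Icc <;> linarith
  have hcomp : IsCompact (ρ '' Set.Icc (x/2) (2*x)) :=
    (isCompact_Icc).image_of_continuousOn (hρc.mono (Icc_sub_Ici hx))
  exact csInf_le_csInf hcomp.bddBelow
    ((Set.nonempty_Icc.mpr (by linarith)).image ρ) (Set.image_mono hsub)

lemma rhat_pos {w : ℝ} (hw : 0 < w) : 0 < rhat ρ w :=
  lt_min hw (glow_pos hρc hρpos hw)

lemma ff_pos {w : ℝ} (hw : 0 < w) : 0 < ff ρ w :=
  inv_pos.mpr (rhat_pos hρc hρpos hw)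

lemma ff_ge {w : ℝ} (hw : 0 < w) : w⁻¹ ≤ ff ρ w :=
  inv_anti₀ (rhat_pos hρc hρpos hw) (min_le_left _ _)

omit hρpos in
lemma glow_continuousAt {w₀ : ℝ} (hw₀ : 0 < w₀) : ContinuousAt (glow ρ) w₀ := by
  set K := Set.Icc (w₀/4) (4*w₀) with hK
  have hKc : IsCompact K := isCompact_Icc
  have hKsub : K ⊆ Set.Ici 0 := fun x hx => le_trans (by positivity) hx.1
  have hUC : UniformContinuousOn ρ K :=
    hKc.uniformContinuousOn_of_continuous (hρc.mono hKsub)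
  rw [Metric.continuousAt_iff]
  intro ε hε
  rw [Metric.uniformContinuousOn_iff] at hUC
  obtain ⟨δ, hδ, hUCδ⟩ := hUC (ε/2) (by linarith)
  refine ⟨min (w₀/4) (δ/4), by positivity, fun {w} hw => ?_⟩
  rw [Real.dist_eq] at hw
  have hw1 : |w - w₀| < w₀/4 := lt_of_lt_of_le hw (min_le_left _ _)
  have hw2 : |w - w₀| < δ/4 := lt_of_lt_of_le hw (min_le_right _ _)
  rw [abs_lt] at hw1 hw2
  -- one-sided estimate
  have main : ∀ u v : ℝ, 3*w₀/4 ≤ u → u ≤ 5*w₀/4 → 3*w₀/4 ≤ v → v ≤ 5*w₀/4 →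
      |u - v| < δ/2 → glow ρ u ≤ glow ρ v + ε/2 := by
    intro u v hu1 hu2 hv1 hv2 huv
    have hupos : 0 < u := by linarith
    have hvpos : 0 < v := by linarith
    obtain ⟨x₂, hx₂mem, hx₂min⟩ := isCompact_Icc.exists_isMinOn
      (Set.nonempty_Icc.mpr (by linarith : v/2 ≤ 2*v))
      (hρc.mono (Icc_sub_Ici hvpos))
    have hglow_v : glow ρ v = ρ x₂ := by
      apply le_antisymm (glow_le hρc hvpos hx₂mem)
      apply le_csInf ((Set.nonempty_Icc.mpr (by linarith)).image ρ)
      rintro b ⟨z, hz, rfl⟩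
      exact hx₂min hz
    set x₁ := max (u/2) (min x₂ (2*u)) with hx₁def
    have hx₁mem : x₁ ∈ Set.Icc (u/2) (2*u) :=
      ⟨le_max_left _ _, max_le (by linarith) (min_le_right _ _)⟩
    have hdist : |x₁ - x₂| ≤ 2*|u - v| := by
      rcases lt_or_ge x₂ (u/2) with hc1 | hc1
      · have he : x₁ = u/2 := by
          rw [hx₁def, min_eq_left (by linarith : x₂ ≤ 2*u), max_eq_left hc1.le]
        rw [he]
        rw [abs_le]
        constructor
        · nlinarith [hx₂mem.1, abs_nonneg (u - v)]
        · have h8 : u/2 - x₂ ≤ u/2 - v/2 := by linarith [hx₂mem.1]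
          have h9 : u - v ≤ |u - v| := le_abs_self _
          linarith
      · rcases le_or_gt x₂ (2*u) with hc2 | hc2
        · have he : x₁ = x₂ := by
            rw [hx₁def, min_eq_left hc2, max_eq_right hc1]
          rw [he, sub_self, abs_zero]
          positivity
        · have he : x₁ = 2*u := by
            rw [hx₁def, min_eq_right hc2.le, max_eq_right (by linarith)]
          rw [he, abs_le]
          constructor
          · have h8 : x₂ ≤ 2*v := hx₂mem.2
            have h9 : v - u ≤ |u - v| := by rw [abs_sub_comm]; exact le_abs_self _
            linarith
          · nlinarith [abs_nonneg (u - v)]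
    have hx₁K : x₁ ∈ K := by
      constructor
      · exact le_trans (by linarith) hx₁mem.1
      · exact le_trans hx₁mem.2 (by linarith)
    have hx₂K : x₂ ∈ K := by
      constructor
      · exact le_trans (by linarith) hx₂mem.1
      · exact le_trans hx₂mem.2 (by linarith)
    have hd12 : dist x₁ x₂ < δ := by
      rw [Real.dist_eq]
      calc |x₁ - x₂| ≤ 2*|u - v| := hdist
      _ < δ := by linarith
    have := hUCδ x₁ hx₁K x₂ hx₂K hd12
    rw [Real.dist_eq, abs_lt] at this
    calc glow ρ u ≤ ρ x₁ := glow_le hρc hupos hx₁mem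
    _ ≤ ρ x₂ + ε/2 := by linarith
    _ = glow ρ v + ε/2 := by rw [hglow_v]
  have b1 : glow ρ w ≤ glow ρ w₀ + ε/2 := by
    apply main <;> first
      | (rw [abs_lt]; constructor <;> linarith)
      | linarith
  have b2 : glow ρ w₀ ≤ glow ρ w + ε/2 := by
    apply main <;> first
      | (rw [abs_lt]; constructor <;> linarith)
      | linarith
  rw [Real.dist_eq, abs_lt]
  constructor <;> linarith

lemma ff_continuousAt {w : ℝ} (hw : 0 < w) : ContinuousAt (ff ρ) w := by
  have h1 : ContinuousAt (fun x => min x (glow ρ x)) w :=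
    continuousAt_id.min (glow_continuousAt hρc hw)
  have h2 : ContinuousAt (rhat ρ) w := h1
  exact h2.inv₀ (ne_of_gt (rhat_pos hρc hρpos hw))

lemma ff_intervalIntegrable {a b : ℝ} (ha : 0 < a) (hb : 0 < b) :
    IntervalIntegrable (ff ρ) volume a b := by
  apply ContinuousOn.intervalIntegrable
  intro x hx
  have hx0 : 0 < x := lt_of_lt_of_le (lt_min ha hb) hx.1
  exact (ff_continuousAt hρc hρpos hx0).continuousWithinAt

end

noncomputable def Phi (ρ : ℝ → ℝ) (s : ℝ) : ℝ := ∫ w in (1:ℝ)..s, ff ρ w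
noncomputable def psi (ρ : ℝ → ℝ) (x : ℝ) : ℝ := sSup {s : ℝ | 0 < s ∧ Phi ρ s ≤ x}

section
variable {ρ : ℝ → ℝ} (hρc : ContinuousOn ρ (Set.Ici 0))
  (hρpos : ∀ s > (0:ℝ), 0 < ρ s)
include hρc hρpos

omit hρc hρpos in
lemma Phi_one : Phi ρ 1 = 0 := intervalIntegral.integral_same

lemma Phi_sub {a b : ℝ} (ha : 0 < a) (hb : 0 < b) :
    Phi ρ b - Phi ρ a = ∫ w in a..b, ff ρ w := by
  have h := intervalIntegral.integral_add_adjacent_intervals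
    (ff_intervalIntegrable hρc hρpos one_pos ha) (ff_intervalIntegrable hρc hρpos ha hb)
  rw [Phi, Phi]
  linarith

lemma Phi_lt {a b : ℝ} (ha : 0 < a) (hab : a < b) : Phi ρ a < Phi ρ b := by
  have hb : 0 < b := ha.trans hab
  have h1 : ∫ _ in a..b, (b⁻¹ : ℝ) ≤ ∫ w in a..b, ff ρ w := by
    apply intervalIntegral.integral_mono_on hab.le intervalIntegrable_const
      (ff_intervalIntegrable hρc hρpos ha hb)
    intro x hx
    have hx0 : 0 < x := lt_of_lt_of_le ha hx.1
    calc (b:ℝ)⁻¹ ≤ x⁻¹ := inv_anti₀ hx0 hx.2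
    _ ≤ ff ρ x := ff_ge hρc hρpos hx0
  rw [intervalIntegral.integral_const, smul_eq_mul] at h1
  have h2 : 0 < (b - a) * (b⁻¹:ℝ) := mul_pos (by linarith) (inv_pos.mpr hb)
  have h3 := Phi_sub hρc hρpos ha hb
  linarith

lemma Phi_mono {a b : ℝ} (ha : 0 < a) (hab : a ≤ b) : Phi ρ a ≤ Phi ρ b := by
  rcases eq_or_lt_of_le hab with rfl | h
  · exact le_refl _
  · exact (Phi_lt hρc hρpos ha h).le

lemma Phi_le_log {s : ℝ} (h0 : 0 < s) (h1 : s ≤ 1) : Phi ρ s ≤ Real.log s := by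
  have h0' : (0:ℝ) ∉ Set.uIcc s 1 := by
    rw [Set.uIcc_of_le h1]
    rintro ⟨hc, -⟩
    exact absurd h0 (not_lt.mpr hc)
  have hint : ∫ w in s..1, w⁻¹ ≤ ∫ w in s..1, ff ρ w := by
    apply intervalIntegral.integral_mono_on h1
      (intervalIntegral.intervalIntegrable_inv
        (fun x hx => by rw [Set.uIcc_of_le h1] at hx; exact ne_of_gt (lt_of_lt_of_le h0 hx.1))
        continuousOn_id)
      (ff_intervalIntegrable hρc hρpos h0 one_pos)
    intro x hx
    exact ff_ge hρc hρpos (lt_of_lt_of_le h0 hx.1)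
  rw [integral_inv h0'] at hint
  have h2 := Phi_sub hρc hρpos h0 one_pos
  rw [Phi_one] at h2
  have h3 : Real.log (1/s) = - Real.log s := by
    rw [one_div, Real.log_inv]
  linarith [h3 ▸ hint]

lemma ff_continuousOn : ContinuousOn (ff ρ) (Set.Ioi 0) :=
  fun x hx => (ff_continuousAt hρc hρpos hx).continuousWithinAt

lemma Phi_continuousAt {s₀ : ℝ} (h : 0 < s₀) : ContinuousAt (Phi ρ) s₀ := by
  have hd : HasDerivAt (Phi ρ) (ff ρ s₀) s₀ :=
    intervalIntegral.integral_hasDerivAt_right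
      (ff_intervalIntegrable hρc hρpos one_pos h)
      ((ff_continuousOn hρc hρpos).stronglyMeasurableAtFilter isOpen_Ioi s₀ h)
      (ff_continuousAt hρc hρpos h)
  exact hd.continuousAt

lemma psi_set_nonempty (x : ℝ) : {s : ℝ | 0 < s ∧ Phi ρ s ≤ x}.Nonempty := by
  refine ⟨min 1 (Real.exp x), lt_min one_pos (Real.exp_pos x), ?_⟩
  rcases le_total (Real.exp x) 1 with h | h
  · rw [min_eq_right h]
    calc Phi ρ (Real.exp x) ≤ Real.log (Real.exp x) :=
          Phi_le_log hρc hρpos (Real.exp_pos x) h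
    _ = x := Real.log_exp x
  · rw [min_eq_left h, Phi_one]
    exact Real.one_le_exp_iff.mp h

lemma psi_bddAbove {x S : ℝ} (hS : 0 < S) (hxS : x ≤ Phi ρ S) :
    BddAbove {s : ℝ | 0 < s ∧ Phi ρ s ≤ x} := by
  refine ⟨S, fun s hs => ?_⟩
  by_contra hns
  push_neg at hns
  exact absurd (hs.2.trans hxS) (not_le.mpr (Phi_lt hρc hρpos hS hns))

lemma psi_le {x S : ℝ} (hS : 0 < S) (hxS : x ≤ Phi ρ S) : psi ρ x ≤ S := by
  apply csSup_le (psi_set_nonempty hρc hρpos x)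
  intro s hs
  by_contra hns
  push_neg at hns
  exact absurd (hs.2.trans hxS) (not_le.mpr (Phi_lt hρc hρpos hS hns))

lemma psi_pos {x S : ℝ} (hS : 0 < S) (hxS : x ≤ Phi ρ S) : 0 < psi ρ x := by
  obtain ⟨s₀, hs₀⟩ := psi_set_nonempty hρc hρpos x
  exact lt_of_lt_of_le hs₀.1 (le_csSup (psi_bddAbove hρc hρpos hS hxS) hs₀)

lemma Phi_psi {x S : ℝ} (hS : 0 < S) (hxS : x ≤ Phi ρ S) : Phi ρ (psi ρ x) = x := by
  obtain ⟨s₀, hs₀pos, hs₀⟩ := psi_set_nonempty hρc hρpos x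
  set s₁ := min s₀ S with hs₁def
  have hs₁pos : 0 < s₁ := lt_min hs₀pos hS
  have hs₁ : Phi ρ s₁ ≤ x :=
    le_trans (Phi_mono hρc hρpos hs₁pos (min_le_left _ _)) hs₀
  have hcont : ContinuousOn (Phi ρ) (Set.Icc s₁ S) := fun u hu =>
    (Phi_continuousAt hρc hρpos (lt_of_lt_of_le hs₁pos hu.1)).continuousWithinAt
  obtain ⟨sstar, hsstar, heq⟩ :=
    intermediate_value_Icc (min_le_right s₀ S) hcont ⟨hs₁, hxS⟩
  have hsstarpos : 0 < sstar := lt_of_lt_of_le hs₁pos hsstar.1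
  have h1 : psi ρ x ≤ sstar := by
    apply csSup_le (psi_set_nonempty hρc hρpos x)
    intro s hs
    by_contra hns
    push_neg at hns
    have := Phi_lt hρc hρpos hsstarpos hns
    rw [heq] at this
    exact absurd hs.2 (not_le.mpr this)
  have h2 : sstar ≤ psi ρ x :=
    le_csSup (psi_bddAbove hρc hρpos hS hxS) ⟨hsstarpos, heq.le⟩
  rw [le_antisymm h1 h2, heq]

lemma psi_Phi {s : ℝ} (hs : 0 < s) : psi ρ (Phi ρ s) = s := by
  have h1 : Phi ρ (psi ρ (Phi ρ s)) = Phi ρ s := Phi_psi hρc hρpos hs (le_refl _)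
  have hp : 0 < psi ρ (Phi ρ s) := psi_pos hρc hρpos hs (le_refl _)
  rcases lt_trichotomy (psi ρ (Phi ρ s)) s with h | h | h
  · exact absurd h1 (ne_of_lt (Phi_lt hρc hρpos hp h))
  · exact h
  · exact absurd h1 (ne_of_gt (Phi_lt hρc hρpos hs h))

lemma psi_mono {x x' S : ℝ} (hS : 0 < S) (hx'S : x' ≤ Phi ρ S) (hxx' : x ≤ x') :
    psi ρ x ≤ psi ρ x' :=
  csSup_le_csSup (psi_bddAbove hρc hρpos hS hx'S) (psi_set_nonempty hρc hρpos x)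
    (fun s hs => ⟨hs.1, hs.2.trans hxx'⟩)

lemma psi_continuousAt {x₀ S : ℝ} (hS : 0 < S) (hx₀ : x₀ < Phi ρ S) :
    ContinuousAt (psi ρ) x₀ := by
  rw [Metric.continuousAt_iff]
  intro ε hε
  set s₀ := psi ρ x₀ with hs₀def
  have hs₀pos : 0 < s₀ := psi_pos hρc hρpos hS hx₀.le
  have hPhis₀ : Phi ρ s₀ = x₀ := Phi_psi hρc hρpos hS hx₀.le
  set ε' := min (ε/2) (s₀/2) with hε'def
  have hε'pos : 0 < ε' := lt_min (by linarith) (by linarith)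
  have hε's : ε' ≤ s₀/2 := min_le_right _ _
  have hlow : 0 < s₀ - ε' := by linarith
  have hd1 : Phi ρ (s₀ - ε') < x₀ := by
    rw [← hPhis₀]
    exact Phi_lt hρc hρpos hlow (by linarith)
  have hd2 : x₀ < Phi ρ (s₀ + ε') := by
    rw [← hPhis₀]
    exact Phi_lt hρc hρpos hs₀pos (by linarith)
  refine ⟨min (x₀ - Phi ρ (s₀ - ε')) (Phi ρ (s₀ + ε') - x₀),
    lt_min (by linarith) (by linarith), fun {x} hx => ?_⟩
  rw [Real.dist_eq] at hx ⊢
  have hx1 : Phi ρ (s₀ - ε') < x := by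
    have := abs_lt.mp (lt_of_lt_of_le hx (min_le_left _ _))
    linarith [this.1]
  have hx2 : x < Phi ρ (s₀ + ε') := by
    have := abs_lt.mp (lt_of_lt_of_le hx (min_le_right _ _))
    linarith [this.2]
  have hub : psi ρ x ≤ s₀ + ε' := psi_le hρc hρpos (by linarith) hx2.le
  have hlb : s₀ - ε' ≤ psi ρ x :=
    le_csSup (psi_bddAbove hρc hρpos (by linarith) hx2.le) ⟨hlow, hx1.le⟩
  have habs : |psi ρ x - s₀| ≤ ε' := abs_le.mpr ⟨by linarith, by linarith⟩
  calc |psi ρ x - psi ρ x₀| = |psi ρ x - s₀| := rfl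
  _ ≤ ε' := habs
  _ < ε := lt_of_le_of_lt (min_le_left _ _) (by linarith)

end
noncomputable def sig (ρ : ℝ → ℝ) (s t : ℝ) : ℝ :=
  if s ≤ 0 then 0 else psi ρ (Phi ρ s - t)

lemma sig_eq_zero {ρ : ℝ → ℝ} {s : ℝ} (t : ℝ) (hs : s ≤ 0) : sig ρ s t = 0 := if_pos hs

lemma sig_eq {ρ : ℝ → ℝ} {s : ℝ} (t : ℝ) (hs : 0 < s) :
    sig ρ s t = psi ρ (Phi ρ s - t) := if_neg (not_le.mpr hs)

section
variable {ρ : ℝ → ℝ} (hρc : ContinuousOn ρ (Set.Ici 0))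
  (hρpos : ∀ s > (0:ℝ), 0 < ρ s)
include hρc hρpos

lemma sig_pos {s t : ℝ} (hs : 0 < s) (ht : 0 ≤ t) : 0 < sig ρ s t := by
  rw [sig_eq t hs]
  exact psi_pos hρc hρpos hs (sub_le_self _ ht)

lemma sig_nonneg (s t : ℝ) (ht : 0 ≤ t) : 0 ≤ sig ρ s t := by
  rcases le_or_gt s 0 with h | h
  · rw [sig_eq_zero t h]
  · exact (sig_pos hρc hρpos h ht).le

lemma sig_zero_right {s : ℝ} (hs : 0 ≤ s) : sig ρ s 0 = s := by
  rcases le_or_gt s 0 with h | h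
  · rw [sig_eq_zero 0 h]
    linarith [le_antisymm h hs]
  · rw [sig_eq 0 h, sub_zero, psi_Phi hρc hρpos h]

lemma sig_le_fst {s t : ℝ} (hs : 0 ≤ s) (ht : 0 ≤ t) : sig ρ s t ≤ s := by
  rcases le_or_gt s 0 with h | h
  · rw [sig_eq_zero t h]; exact hs
  · rw [sig_eq t h]; exact psi_le hρc hρpos h (sub_le_self _ ht)

lemma sig_strictMonoOn {t : ℝ} (ht : 0 ≤ t) :
    StrictMonoOn (fun s => sig ρ s t) (Set.Ici 0) := by
  intro s hs s' _ hss'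
  have hs0 : (0:ℝ) ≤ s := hs
  have hs'pos : 0 < s' := lt_of_le_of_lt hs0 hss'
  simp only
  rcases le_or_gt s 0 with h | h
  · rw [sig_eq_zero t h]
    exact sig_pos hρc hρpos hs'pos ht
  · rw [sig_eq t h, sig_eq t hs'pos]
    apply lt_of_not_ge
    intro hcon
    have h1 : Phi ρ (psi ρ (Phi ρ s' - t)) ≤ Phi ρ (psi ρ (Phi ρ s - t)) :=
      Phi_mono hρc hρpos (psi_pos hρc hρpos hs'pos (sub_le_self _ ht)) hcon
    rw [Phi_psi hρc hρpos hs'pos (sub_le_self _ ht),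
        Phi_psi hρc hρpos h (sub_le_self _ ht)] at h1
    have := Phi_lt hρc hρpos h hss'
    linarith

lemma sig_antitoneOn {s : ℝ} (hs : 0 ≤ s) : AntitoneOn (sig ρ s) (Set.Ici 0) := by
  intro u hu u' _ huu'
  have hu0 : (0:ℝ) ≤ u := hu
  rcases le_or_gt s 0 with h | h
  · rw [sig_eq_zero u h, sig_eq_zero u' h]
  · rw [sig_eq u h, sig_eq u' h]
    exact psi_mono hρc hρpos h (sub_le_self _ hu0) (by linarith)

lemma sig_tendsto (s : ℝ) : Tendsto (sig ρ s) atTop (nhds 0) := by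
  rcases le_or_gt s 0 with h | h
  · have heq : sig ρ s = fun _ => 0 := funext fun t => sig_eq_zero t h
    rw [heq]
    exact tendsto_const_nhds
  · rw [Metric.tendsto_atTop]
    intro ε hε
    set ε₀ := min (ε/2) s with hε₀
    have hε₀pos : 0 < ε₀ := lt_min (by linarith) h
    refine ⟨max 0 (Phi ρ s - Phi ρ ε₀), fun t htt => ?_⟩
    have ht0 : 0 ≤ t := le_trans (le_max_left _ _) htt
    have htP : Phi ρ s - t ≤ Phi ρ ε₀ := by
      have := le_trans (le_max_right _ _) htt
      linarith
    have h1 : sig ρ s t ≤ ε₀ := by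
      rw [sig_eq t h]
      exact psi_le hρc hρpos hε₀pos htP
    have h2 : 0 < sig ρ s t := sig_pos hρc hρpos h ht0
    rw [Real.dist_eq, sub_zero, abs_of_pos h2]
    calc sig ρ s t ≤ ε₀ := h1
    _ ≤ ε/2 := min_le_left _ _
    _ < ε := by linarith

lemma sig_continuousAt {s t : ℝ} (hs : 0 < s) (ht : 0 ≤ t) :
    ContinuousAt (fun p : ℝ × ℝ => sig ρ p.1 p.2) (s, t) := by
  have ha : Phi ρ s - t < Phi ρ (s + 1) :=
    lt_of_le_of_lt (sub_le_self _ ht) (Phi_lt hρc hρpos hs (by linarith))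
  have hψ : ContinuousAt (psi ρ) (Phi ρ s - t) :=
    psi_continuousAt hρc hρpos (by linarith : (0:ℝ) < s + 1) ha
  have hΦ : ContinuousAt (fun p : ℝ × ℝ => Phi ρ p.1 - p.2) (s, t) :=
    ContinuousAt.sub (f := fun p : ℝ × ℝ => Phi ρ p.1) (g := fun p : ℝ × ℝ => p.2)
      (ContinuousAt.comp (f := Prod.fst) (x := (s, t)) (Phi_continuousAt hρc hρpos hs)
        continuousAt_fst) continuousAt_snd
  have hcomp : ContinuousAt ((psi ρ) ∘ (fun p : ℝ × ℝ => Phi ρ p.1 - p.2)) (s, t) :=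
    ContinuousAt.comp hψ hΦ
  apply hcomp.congr
  have hopen : IsOpen {p : ℝ × ℝ | 0 < p.1} := isOpen_lt continuous_const continuous_fst
  filter_upwards [hopen.mem_nhds (show (0:ℝ) < (s, t).1 from hs)] with p hp
  exact (sig_eq p.2 hp).symm

lemma sig_continuousOn_prod :
    ContinuousOn (fun p : ℝ × ℝ => sig ρ p.1 p.2) (Set.Ici 0 ×ˢ Set.Ici 0) := by
  rintro ⟨s, t⟩ ⟨hs, ht⟩
  simp only [Set.mem_Ici] at hs ht
  rcases eq_or_lt_of_le hs with heq | hpos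
  · subst heq
    have hval : sig ρ 0 t = 0 := sig_eq_zero t (le_refl 0)
    show Tendsto (fun p : ℝ × ℝ => sig ρ p.1 p.2)
      (nhdsWithin (0, t) (Set.Ici 0 ×ˢ Set.Ici 0)) (nhds (sig ρ 0 t))
    rw [hval]
    have hfst : Tendsto (fun p : ℝ × ℝ => p.1)
        (nhdsWithin ((0:ℝ), t) (Set.Ici 0 ×ˢ Set.Ici 0)) (nhds 0) :=
      (continuous_fst.tendsto _).mono_left nhdsWithin_le_nhds
    refine tendsto_of_tendsto_of_tendsto_of_le_of_le' tendsto_const_nhds hfst ?_ ?_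
    · exact eventually_nhdsWithin_of_forall fun p hp => sig_nonneg hρc hρpos p.1 p.2 hp.2
    · exact eventually_nhdsWithin_of_forall fun p hp => sig_le_fst hρc hρpos hp.1 hp.2
  · exact (sig_continuousAt hρc hρpos hpos ht).continuousWithinAt

lemma sig_continuousOn_fst {t : ℝ} (ht : 0 ≤ t) :
    ContinuousOn (fun s => sig ρ s t) (Set.Ici 0) := by
  intro s hs
  rcases eq_or_lt_of_le (show (0:ℝ) ≤ s from hs) with heq | hpos
  · subst heq
    have hval : sig ρ 0 t = 0 := sig_eq_zero t (le_refl 0)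
    show Tendsto (fun s' => sig ρ s' t) (nhdsWithin 0 (Set.Ici 0)) (nhds (sig ρ 0 t))
    rw [hval]
    have hid : Tendsto (fun s' : ℝ => s') (nhdsWithin (0:ℝ) (Set.Ici 0)) (nhds 0) :=
      (continuous_id.tendsto _).mono_left nhdsWithin_le_nhds
    refine tendsto_of_tendsto_of_tendsto_of_le_of_le' tendsto_const_nhds hid ?_ ?_
    · exact eventually_nhdsWithin_of_forall fun s' hs' => sig_nonneg hρc hρpos s' t ht
    · exact eventually_nhdsWithin_of_forall fun s' hs' => sig_le_fst hρc hρpos hs' ht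
  · have ha : Phi ρ s - t < Phi ρ (s + 1) :=
      lt_of_le_of_lt (sub_le_self _ ht) (Phi_lt hρc hρpos hpos (by linarith))
    have hψ : ContinuousAt (psi ρ) (Phi ρ s - t) :=
      psi_continuousAt hρc hρpos (by linarith) ha
    have hcomp : ContinuousAt ((psi ρ) ∘ (fun s' => Phi ρ s' - t)) s :=
      ContinuousAt.comp hψ ((Phi_continuousAt hρc hρpos hpos).sub continuousAt_const)
    apply ContinuousAt.continuousWithinAt
    apply hcomp.congr
    filter_upwards [isOpen_Ioi.mem_nhds (show s ∈ Set.Ioi (0:ℝ) from hpos)] with s' hs'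
    simp only [Function.comp_apply]
    exact (sig_eq t hs').symm

end

end KLaux

/-- For each positive definite continuous `ρ : [0,∞) → [0,∞)` there exists a continuous
function `σ` of class `KL` with `σ(s,0) = s` for all `s ≥ 0`, such that: if `t₀ ≤ t₁`,
`y : [t₀, t₁] → [0,∞)` is absolutely continuous and `I ⊂ [t₀, t₁]` has Lebesgue measure
zero, `ẏ t` exists and satisfies `ẏ t ≤ -ρ (y t)` for all `t ∈ [t₀, t₁] \ I`, then
`y t ≤ σ(y t₀, t − t₀)` for all `t ∈ [t₀, t₁]`. -/
theorem stmt_2 (ρ : ℝ → ℝ)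
    (hρc : ContinuousOn ρ (Set.Ici 0))
    (hρ0 : ρ 0 = 0) (hρpos : ∀ s > (0:ℝ), 0 < ρ s) :
    ∃ σ : ℝ → ℝ → ℝ, ClassKL σ ∧ (∀ s ≥ (0:ℝ), σ s 0 = s) ∧
      ∀ t₀ t₁ : ℝ, t₀ ≤ t₁ → ∀ y : ℝ → ℝ, ∀ I : Set ℝ,
        AbsContOn y t₀ t₁ →
        (∀ t ∈ Set.Icc t₀ t₁, 0 ≤ y t) →
        I ⊆ Set.Icc t₀ t₁ →
        MeasureTheory.volume I = 0 →
        (∀ t ∈ Set.Icc t₀ t₁ \ I, DifferentiableAt ℝ y t ∧ deriv y t ≤ -ρ (y t)) →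
        ∀ t ∈ Set.Icc t₀ t₁, y t ≤ σ (y t₀) (t - t₀) := by
  classical
  refine ⟨sig ρ, ⟨sig_continuousOn_prod hρc hρpos, ?_, ?_, ?_⟩, ?_, ?_⟩
  · intro t ht
    exact ⟨sig_continuousOn_fst hρc hρpos ht, sig_strictMonoOn hρc hρpos ht,
      sig_eq_zero t (le_refl 0)⟩
  · intro s hs
    exact ⟨sig_antitoneOn hρc hρpos hs, sig_tendsto hρc hρpos s⟩
  · intro s _ t ht
    exact sig_nonneg hρc hρpos s t ht
  · intro s hs
    exact sig_zero_right hρc hρpos hs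
  · intro t₀ t₁ ht01 y I hAC hynn hIsub hI0 hder t ht
    -- y is non-increasing
    have hmono : ∀ u ∈ Set.Icc t₀ t₁, ∀ v ∈ Set.Icc t₀ t₁, u ≤ v → y v ≤ y u := by
      intro u hu v hv huv
      have hkey := key (c := 0) hAC hI0 hu.1 huv hv.2 ?_
      · rw [zero_mul] at hkey
        linarith
      · intro τ hτ
        have hτIcc : τ ∈ Set.Icc t₀ t₁ := ⟨hu.1.trans hτ.1.1, hτ.1.2.trans hv.2⟩
        obtain ⟨hdiff, hd2⟩ := hder τ ⟨hτIcc, hτ.2⟩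
        refine ⟨hdiff, hd2.trans ?_⟩
        have hy0 : 0 ≤ y τ := hynn τ hτIcc
        rcases eq_or_lt_of_le hy0 with heq | hpos
        · rw [← heq, hρ0]
          norm_num
        · linarith [hρpos _ hpos]
    -- comparison with the integral of ff, by induction on dyadic levels
    have claim : ∀ n : ℕ, ∀ u v : ℝ, u ∈ Set.Icc t₀ t₁ → v ∈ Set.Icc t₀ t₁ → u ≤ v →
        0 < y v → y u ≤ 2^n * y v → v - u ≤ ∫ z in (y v)..(y u), ff ρ z := by
      intro n
      induction n with
      | zero =>
        intro u v hu hv huv hyv hle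
        rw [pow_zero, one_mul] at hle
        have heq : y u = y v := le_antisymm hle (hmono u hu v hv huv)
        have hkey := key (c := -ρ (y v)) hAC hI0 hu.1 huv hv.2 ?_
        · have hρv : 0 < ρ (y v) := hρpos _ hyv
          have hvu : v - u ≤ 0 := by nlinarith
          rw [heq, intervalIntegral.integral_same]
          exact hvu
        · intro τ hτ
          have hτIcc : τ ∈ Set.Icc t₀ t₁ := ⟨hu.1.trans hτ.1.1, hτ.1.2.trans hv.2⟩
          obtain ⟨hdiff, hd2⟩ := hder τ ⟨hτIcc, hτ.2⟩
          have h1 : y τ ≤ y u := hmono u hu τ hτIcc hτ.1.1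
          have h2 : y v ≤ y τ := hmono τ hτIcc v hv hτ.1.2
          have h3 : y τ = y v := le_antisymm (heq ▸ h1) h2
          exact ⟨hdiff, by rw [← h3]; exact hd2⟩
      | succ n ih =>
        intro u v hu hv huv hyv hle
        by_cases hcase : y u ≤ 2^n * y v
        · exact ih u v hu hv huv hyv hcase
        push_neg at hcase
        set w := 2^n * y v with hwdef
        have hwpos : 0 < w := by positivity
        have hyu2w : y u ≤ 2 * w := by
          rw [pow_succ] at hle
          rw [hwdef]
          linarith
        have hyu_pos : 0 < y u := lt_trans hwpos hcase
        have hycont : ContinuousOn y (Set.Icc u v) :=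
          (abscont_continuousOn hAC).mono (Set.Icc_subset_Icc hu.1 hv.2)
        set SS := Set.Icc u v ∩ y ⁻¹' Set.Ici w with hSS
        have hSSclosed : IsClosed SS :=
          hycont.preimage_isClosed_of_isClosed isClosed_Icc isClosed_Ici
        have huSS : u ∈ SS := ⟨⟨le_refl u, huv⟩, hcase.le⟩
        have hSSne : SS.Nonempty := ⟨u, huSS⟩
        have hSSbdd : BddAbove SS := ⟨v, fun τ hτ => hτ.1.2⟩
        set c₀ := sSup SS with hc₀
        have hc₀SS : c₀ ∈ SS := hSSclosed.csSup_mem hSSne hSSbdd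
        have huc₀ : u ≤ c₀ := hc₀SS.1.1
        have hc₀v : c₀ ≤ v := hc₀SS.1.2
        have hc₀Icc : c₀ ∈ Set.Icc t₀ t₁ := ⟨hu.1.trans huc₀, hc₀v.trans hv.2⟩
        have hyc₀_ge : w ≤ y c₀ := hc₀SS.2
        have hyc₀_le : y c₀ ≤ w := by
          rcases eq_or_lt_of_le hc₀v with heqv | hlt
          · rw [heqv, hwdef]
            nlinarith [one_le_pow₀ (show (1:ℝ) ≤ 2 by norm_num) (n := n)]
          · have hcl : c₀ ∈ closure (Set.Ioc c₀ v) := by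
              rw [closure_Ioc (ne_of_lt hlt)]
              exact ⟨le_refl _, hlt.le⟩
            have hnb : (nhdsWithin c₀ (Set.Ioc c₀ v)).NeBot :=
              mem_closure_iff_nhdsWithin_neBot.mp hcl
            have htends : Tendsto y (nhdsWithin c₀ (Set.Ioc c₀ v)) (nhds (y c₀)) :=
              (hycont c₀ ⟨huc₀, hc₀v⟩).mono fun τ hτ => ⟨huc₀.trans hτ.1.le, hτ.2⟩
            refine le_of_tendsto htends (eventually_nhdsWithin_of_forall fun τ hτ => ?_)
            by_contra hcon
            push_neg at hcon
            have hτSS : τ ∈ SS := ⟨⟨huc₀.trans hτ.1.le, hτ.2⟩, hcon.le⟩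
            exact absurd (le_csSup hSSbdd hτSS) (not_le.mpr hτ.1)
        have hyc₀ : y c₀ = w := le_antisymm hyc₀_le hyc₀_ge
        -- the infimum of ρ on [w, 2w]
        have hsub2 : Set.Icc w (2*w) ⊆ Set.Ici 0 := fun z hz => le_trans hwpos.le hz.1
        have hcompact : IsCompact (ρ '' Set.Icc w (2*w)) :=
          isCompact_Icc.image_of_continuousOn (hρc.mono hsub2)
        set m := sInf (ρ '' Set.Icc w (2*w)) with hmdef
        have hm_mem := hcompact.sInf_mem ((Set.nonempty_Icc.mpr (by linarith)).image ρ)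
        have hmpos : 0 < m := by
          obtain ⟨x₀, hx₀, hx₀eq⟩ := hm_mem
          rw [hmdef, ← hx₀eq]
          exact hρpos x₀ (lt_of_lt_of_le hwpos hx₀.1)
        have hmle : ∀ z ∈ Set.Icc w (2*w), m ≤ ρ z := fun z hz =>
          csInf_le hcompact.bddBelow (Set.mem_image_of_mem ρ hz)
        -- segment [u, c₀]
        have hD1 : ∀ τ ∈ Set.Icc u c₀ \ I, DifferentiableAt ℝ y τ ∧ deriv y τ ≤ -m := by
          intro τ hτ
          have hτuv : τ ∈ Set.Icc u v := ⟨hτ.1.1, hτ.1.2.trans hc₀v⟩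
          have hτIcc : τ ∈ Set.Icc t₀ t₁ := ⟨hu.1.trans hτ.1.1, hτuv.2.trans hv.2⟩
          obtain ⟨hdiff, hd2⟩ := hder τ ⟨hτIcc, hτ.2⟩
          refine ⟨hdiff, hd2.trans ?_⟩
          have hylo : w ≤ y τ := hyc₀ ▸ hmono τ hτIcc c₀ hc₀Icc hτ.1.2
          have hyhi : y τ ≤ 2*w := le_trans (hmono u hu τ hτIcc hτ.1.1) hyu2w
          have := hmle (y τ) ⟨hylo, hyhi⟩
          linarith
        have hseg1 := key hAC hI0 hu.1 huc₀ hc₀Icc.2 hD1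
        have hintegr1 : IntervalIntegrable (ff ρ) volume w (y u) :=
          ff_intervalIntegrable hρc hρpos hwpos hyu_pos
        have hff_lb : ∀ z ∈ Set.Icc w (y u), m⁻¹ ≤ ff ρ z := by
          intro z hz
          have hz0 : 0 < z := lt_of_lt_of_le hwpos hz.1
          have h7 : glow ρ z ≤ m := glow_anti hρc hwpos hz.1 (hz.2.trans hyu2w)
          have h8 : rhat ρ z ≤ m := le_trans (min_le_right _ _) h7
          exact inv_anti₀ (rhat_pos hρc hρpos hz0) h8
        have hmono_int : ∫ z in w..(y u), (m⁻¹:ℝ) ≤ ∫ z in w..(y u), ff ρ z :=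
          intervalIntegral.integral_mono_on hcase.le intervalIntegrable_const hintegr1 hff_lb
        rw [intervalIntegral.integral_const, smul_eq_mul] at hmono_int
        have hc₀u_le : c₀ - u ≤ (y u - w) * m⁻¹ := by
          have h9 : m * (c₀ - u) ≤ y u - w := by
            rw [hyc₀] at hseg1
            nlinarith
          calc c₀ - u = (m * (c₀ - u)) * m⁻¹ := by field_simp
          _ ≤ (y u - w) * m⁻¹ := mul_le_mul_of_nonneg_right h9 (inv_nonneg.mpr hmpos.le)
        -- segment [c₀, v] by induction hypothesis
        have hih := ih c₀ v hc₀Icc hv hc₀v hyv (le_of_eq (by rw [hyc₀]))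
        rw [hyc₀] at hih
        have hadd := intervalIntegral.integral_add_adjacent_intervals
          (ff_intervalIntegrable hρc hρpos hyv hwpos)
          (ff_intervalIntegrable hρc hρpos hwpos hyu_pos)
        linarith
    -- conclusion
    have ht₀Icc : t₀ ∈ Set.Icc t₀ t₁ := ⟨le_refl _, ht01⟩
    have hyt₀0 : 0 ≤ y t₀ := hynn t₀ ht₀Icc
    rcases eq_or_lt_of_le hyt₀0 with heq0 | hyt₀pos
    · have h1 : y t ≤ y t₀ := hmono t₀ ht₀Icc t ht ht.1
      rw [sig_eq_zero _ (le_of_eq heq0.symm)]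
      linarith
    · have hyt0 : 0 ≤ y t := hynn t ht
      rcases eq_or_lt_of_le hyt0 with heqt | hytpos
      · rw [← heqt]
        exact sig_nonneg hρc hρpos _ _ (by linarith [ht.1])
      · obtain ⟨n, hn⟩ := pow_unbounded_of_one_lt (y t₀ / y t) (one_lt_two)
        have hle : y t₀ ≤ 2^n * y t := by
          rw [div_lt_iff₀ hytpos] at hn
          linarith
        have hclaim := claim n t₀ t ht₀Icc ht ht.1 hytpos hle
        have hPhidiff := Phi_sub hρc hρpos hytpos hyt₀pos
        have h10 : Phi ρ (y t) ≤ Phi ρ (y t₀) - (t - t₀) := by linarith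
        rw [sig_eq _ hyt₀pos]
        calc y t = psi ρ (Phi ρ (y t)) := (psi_Phi hρc hρpos hytpos).symm
        _ ≤ psi ρ (Phi ρ (y t₀) - (t - t₀)) :=
          psi_mono hρc hρpos hyt₀pos (sub_le_self _ (by linarith [ht.1])) h10
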